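/- Let (p,q) ∈ ℤ^n × ℕ with gcd(p,q) = 1, let r = gcd(p), and let γ_p ∈ SL_n(ℤ) be such that p = r·e_n·γ_p. Then the stabilizer of the affine lattice ℤ^n + p/q under the action g·Λ = Λ·g^{−1} of SL_n(ℝ) is exactly γ_p^{−1}·Γ₁ⁿ(q)·γ_p; that is, for g ∈ SL_n(ℝ) one has (ℤ^n + p/q)·g = ℤ^n + p/q if and only if γ_p·g·γ_p^{−1} ∈ Γ₁ⁿ(q). Consequently the map g ↦ (ℤ^n + p/q)·g induces an identification of Y_{p/q} = {(ℤ^n + p/q)·g : g ∈ SL_n(ℝ)} with the homogeneous space γ_p^{−1}Γ₁ⁿ(q)γ_p\SL_n(ℝ). -/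

import Mathlib

open MeasureTheory Matrix Filter
open scoped ENNReal

noncomputable section

abbrev SLR (n : ℕ) := Matrix.SpecialLinearGroup (Fin n) ℝ
abbrev SLZ (n : ℕ) := Matrix.SpecialLinearGroup (Fin n) ℤ

instance SLRTop (n : ℕ) : TopologicalSpace (SLR n) :=
  inferInstanceAs (TopologicalSpace {A : Matrix (Fin n) (Fin n) ℝ // A.det = 1})

def ιR (n : ℕ) : SLZ n →* SLR n := Matrix.SpecialLinearGroup.map (Int.castRingHom ℝ)

def SLZsub (n : ℕ) : Subgroup (SLR n) := (ιR n).range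

def en (n : ℕ) : Fin n → ℤ := fun i => if (i : ℕ) = n - 1 then 1 else 0
def enR (n : ℕ) : Fin n → ℝ := fun i => if (i : ℕ) = n - 1 then 1 else 0
def enM (n q : ℕ) : Fin n → ZMod q := fun i => if (i : ℕ) = n - 1 then 1 else 0

def ιM (n q : ℕ) : SLZ n →* Matrix.SpecialLinearGroup (Fin n) (ZMod q) :=
  Matrix.SpecialLinearGroup.map (Int.castRingHom (ZMod q))

def Gamma1 (n q : ℕ) : Subgroup (SLZ n) where
  carrier := {γ | Matrix.vecMul (enM n q) ((ιM n q γ : Matrix.SpecialLinearGroup (Fin n) (ZMod q)) : Matrix (Fin n) (Fin n) (ZMod q)) = enM n q}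
  one_mem' := by simp
  mul_mem' := by
    intro a b ha hb
    have ha' : Matrix.vecMul (enM n q) ((ιM n q a : Matrix.SpecialLinearGroup (Fin n) (ZMod q)) : Matrix (Fin n) (Fin n) (ZMod q)) = enM n q := ha
    have hb' : Matrix.vecMul (enM n q) ((ιM n q b : Matrix.SpecialLinearGroup (Fin n) (ZMod q)) : Matrix (Fin n) (Fin n) (ZMod q)) = enM n q := hb
    show Matrix.vecMul (enM n q) ((ιM n q (a * b) : Matrix.SpecialLinearGroup (Fin n) (ZMod q)) : Matrix (Fin n) (Fin n) (ZMod q)) = enM n q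
    rw [_root_.map_mul, Matrix.SpecialLinearGroup.coe_mul, ← Matrix.vecMul_vecMul, ha', hb']
  inv_mem' := by
    intro a ha
    have ha' : Matrix.vecMul (enM n q) ((ιM n q a : Matrix.SpecialLinearGroup (Fin n) (ZMod q)) : Matrix (Fin n) (Fin n) (ZMod q)) = enM n q := ha
    show Matrix.vecMul (enM n q) ((ιM n q a⁻¹ : Matrix.SpecialLinearGroup (Fin n) (ZMod q)) : Matrix (Fin n) (Fin n) (ZMod q)) = enM n q
    rw [_root_.map_inv]
    have key : ((ιM n q a : Matrix.SpecialLinearGroup (Fin n) (ZMod q)) : Matrix (Fin n) (Fin n) (ZMod q)) *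
        (((ιM n q a)⁻¹ : Matrix.SpecialLinearGroup (Fin n) (ZMod q)) : Matrix (Fin n) (Fin n) (ZMod q)) = 1 := by
      rw [← Matrix.SpecialLinearGroup.coe_mul, mul_inv_cancel]
      simp
    calc Matrix.vecMul (enM n q) (((ιM n q a)⁻¹ : Matrix.SpecialLinearGroup (Fin n) (ZMod q)) : Matrix (Fin n) (Fin n) (ZMod q))
        = Matrix.vecMul (Matrix.vecMul (enM n q) ((ιM n q a : Matrix.SpecialLinearGroup (Fin n) (ZMod q)) : Matrix (Fin n) (Fin n) (ZMod q))) (((ιM n q a)⁻¹ : Matrix.SpecialLinearGroup (Fin n) (ZMod q)) : Matrix (Fin n) (Fin n) (ZMod q)) := by rw [ha']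
      _ = Matrix.vecMul (enM n q) (((ιM n q a : Matrix.SpecialLinearGroup (Fin n) (ZMod q)) : Matrix (Fin n) (Fin n) (ZMod q)) * (((ιM n q a)⁻¹ : Matrix.SpecialLinearGroup (Fin n) (ZMod q)) : Matrix (Fin n) (Fin n) (ZMod q))) := Matrix.vecMul_vecMul _ _ _
      _ = enM n q := by rw [key, Matrix.vecMul_one]

def LZ (n : ℕ) : Subgroup (SLZ n) where
  carrier := {γ | Matrix.vecMul (en n) ((γ : SLZ n) : Matrix (Fin n) (Fin n) ℤ) = en n}
  one_mem' := by simp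
  mul_mem' := by
    intro a b ha hb
    have ha' : Matrix.vecMul (en n) ((a : SLZ n) : Matrix (Fin n) (Fin n) ℤ) = en n := ha
    have hb' : Matrix.vecMul (en n) ((b : SLZ n) : Matrix (Fin n) (Fin n) ℤ) = en n := hb
    show Matrix.vecMul (en n) ((a * b : SLZ n) : Matrix (Fin n) (Fin n) ℤ) = en n
    rw [Matrix.SpecialLinearGroup.coe_mul, ← Matrix.vecMul_vecMul, ha', hb']
  inv_mem' := by
    intro a ha
    have ha' : Matrix.vecMul (en n) ((a : SLZ n) : Matrix (Fin n) (Fin n) ℤ) = en n := ha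
    show Matrix.vecMul (en n) ((a⁻¹ : SLZ n) : Matrix (Fin n) (Fin n) ℤ) = en n
    have key : ((a : Matrix (Fin n) (Fin n) ℤ)) * ((a⁻¹ : SLZ n) : Matrix (Fin n) (Fin n) ℤ) = 1 := by
      rw [← Matrix.SpecialLinearGroup.coe_mul, mul_inv_cancel]
      simp
    calc Matrix.vecMul (en n) ((a⁻¹ : SLZ n) : Matrix (Fin n) (Fin n) ℤ)
        = Matrix.vecMul (Matrix.vecMul (en n) (a : Matrix (Fin n) (Fin n) ℤ)) ((a⁻¹ : SLZ n) : Matrix (Fin n) (Fin n) ℤ) := by rw [ha']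
      _ = Matrix.vecMul (en n) ((a : Matrix (Fin n) (Fin n) ℤ) * ((a⁻¹ : SLZ n) : Matrix (Fin n) (Fin n) ℤ)) := Matrix.vecMul_vecMul _ _ _
      _ = en n := by rw [key, Matrix.vecMul_one]

/-- The map from the coset space `(Γ ∩ L_n)\Γ` to `ℤⁿ` induced by `γ ↦ e_n·γ`. -/
def cosetVec (n : ℕ) (Γ : Subgroup (SLZ n)) :
    Quotient (QuotientGroup.rightRel ((LZ n).subgroupOf Γ)) → (Fin n → ℤ) :=
  fun c => Quotient.liftOn c
    (fun γ => Matrix.vecMul (en n) (((γ : Γ) : SLZ n) : Matrix (Fin n) (Fin n) ℤ))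
    (by
      intro a b hab
      have hab' : (b * a⁻¹ : Γ) ∈ (LZ n).subgroupOf Γ := QuotientGroup.rightRel_apply.mp hab
      have h : Matrix.vecMul (en n) (((b * a⁻¹ : Γ) : SLZ n) : Matrix (Fin n) (Fin n) ℤ) = en n :=
        Subgroup.mem_subgroupOf.mp hab'
      show Matrix.vecMul (en n) (((a : Γ) : SLZ n) : Matrix (Fin n) (Fin n) ℤ)
          = Matrix.vecMul (en n) (((b : Γ) : SLZ n) : Matrix (Fin n) (Fin n) ℤ)
      have hb : (((b : Γ) : SLZ n) : Matrix (Fin n) (Fin n) ℤ)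
          = (((b * a⁻¹ : Γ) : SLZ n) : Matrix (Fin n) (Fin n) ℤ) * (((a : Γ) : SLZ n) : Matrix (Fin n) (Fin n) ℤ) := by
        rw [← Matrix.SpecialLinearGroup.coe_mul]
        congr 1
        simp only [Subgroup.coe_mul, InvMemClass.coe_inv]
        group
        all_goals first | rfl | simp
      rw [hb, ← Matrix.vecMul_vecMul, h])

/-- The incomplete Eisenstein series `Θ_f^Γ`: the sum of `f(e_n·γ·g)` over the
coset space `(Γ ∩ L_n)\Γ`. -/
def Theta (n : ℕ) (Γ : Subgroup (SLZ n)) (f : (Fin n → ℝ) → ℂ) (g : SLR n) : ℂ :=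
  ∑' c : Quotient (QuotientGroup.rightRel ((LZ n).subgroupOf Γ)),
    f (Matrix.vecMul (fun i => ((cosetVec n Γ c) i : ℝ)) (g : Matrix (Fin n) (Fin n) ℝ))
/-- The real stabilizer `L_n ≤ SL_n(ℝ)` of `e_n`. -/
def LR (n : ℕ) : Subgroup (SLR n) where
  carrier := {g | Matrix.vecMul (enR n) ((g : SLR n) : Matrix (Fin n) (Fin n) ℝ) = enR n}
  one_mem' := by simp
  mul_mem' := by
    intro a b ha hb
    have ha' : Matrix.vecMul (enR n) ((a : SLR n) : Matrix (Fin n) (Fin n) ℝ) = enR n := ha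
    have hb' : Matrix.vecMul (enR n) ((b : SLR n) : Matrix (Fin n) (Fin n) ℝ) = enR n := hb
    show Matrix.vecMul (enR n) ((a * b : SLR n) : Matrix (Fin n) (Fin n) ℝ) = enR n
    rw [Matrix.SpecialLinearGroup.coe_mul, ← Matrix.vecMul_vecMul, ha', hb']
  inv_mem' := by
    intro a ha
    have ha' : Matrix.vecMul (enR n) ((a : SLR n) : Matrix (Fin n) (Fin n) ℝ) = enR n := ha
    show Matrix.vecMul (enR n) ((a⁻¹ : SLR n) : Matrix (Fin n) (Fin n) ℝ) = enR n
    have key : ((a : Matrix (Fin n) (Fin n) ℝ)) * ((a⁻¹ : SLR n) : Matrix (Fin n) (Fin n) ℝ) = 1 := by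
      rw [← Matrix.SpecialLinearGroup.coe_mul, mul_inv_cancel]; simp
    calc Matrix.vecMul (enR n) ((a⁻¹ : SLR n) : Matrix (Fin n) (Fin n) ℝ)
        = Matrix.vecMul (Matrix.vecMul (enR n) (a : Matrix (Fin n) (Fin n) ℝ)) ((a⁻¹ : SLR n) : Matrix (Fin n) (Fin n) ℝ) := by rw [ha']
      _ = Matrix.vecMul (enR n) ((a : Matrix (Fin n) (Fin n) ℝ) * ((a⁻¹ : SLR n) : Matrix (Fin n) (Fin n) ℝ)) := Matrix.vecMul_vecMul _ _ _
      _ = enR n := by rw [key, Matrix.vecMul_one]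

/-- The identity component `P_n ≤ SL_n(ℝ)` of the maximal parabolic subgroup fixing the
line spanned by `e_n`: those `g` with `e_n·g = c·e_n` for some `c > 0`. -/
def PR (n : ℕ) : Subgroup (SLR n) where
  carrier := {g | ∃ c : ℝ, 0 < c ∧
    Matrix.vecMul (enR n) ((g : SLR n) : Matrix (Fin n) (Fin n) ℝ) = c • enR n}
  one_mem' := ⟨1, one_pos, by simp⟩
  mul_mem' := by
    rintro a b ⟨c, hc, hca⟩ ⟨d, hd, hdb⟩
    refine ⟨c * d, mul_pos hc hd, ?_⟩
    show Matrix.vecMul (enR n) ((a * b : SLR n) : Matrix (Fin n) (Fin n) ℝ) = (c * d) • enR n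
    rw [Matrix.SpecialLinearGroup.coe_mul, ← Matrix.vecMul_vecMul, hca,
      Matrix.smul_vecMul, hdb, smul_smul]
  inv_mem' := by
    rintro a ⟨c, hc, hca⟩
    refine ⟨c⁻¹, inv_pos.mpr hc, ?_⟩
    show Matrix.vecMul (enR n) ((a⁻¹ : SLR n) : Matrix (Fin n) (Fin n) ℝ) = c⁻¹ • enR n
    have key : ((a : Matrix (Fin n) (Fin n) ℝ)) * ((a⁻¹ : SLR n) : Matrix (Fin n) (Fin n) ℝ) = 1 := by
      rw [← Matrix.SpecialLinearGroup.coe_mul, mul_inv_cancel]; simp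
    have h2 : c • Matrix.vecMul (enR n) ((a⁻¹ : SLR n) : Matrix (Fin n) (Fin n) ℝ) = enR n := by
      rw [← Matrix.smul_vecMul, ← hca, Matrix.vecMul_vecMul, key, Matrix.vecMul_one]
    have h3 := congrArg (fun w => c⁻¹ • w) h2
    simpa [smul_smul, inv_mul_cancel₀ (ne_of_gt hc)] using h3
/-- The Euclidean norm on `ℝⁿ`. -/
def eNorm (n : ℕ) (v : Fin n → ℝ) : ℝ := Real.sqrt (∑ i : Fin n, (v i) ^ 2)

/-- The standard quadratic form `Q₀` of signature `(p₁, n − p₁)`. -/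
def Q0 (n p₁ : ℕ) (v : Fin n → ℝ) : ℝ := ∑ i : Fin n, if (i : ℕ) < p₁ then (v i) ^ 2 else -((v i) ^ 2)

/-- The Riemann zeta value `ζ(n) = Σ_{k ≥ 1} k⁻ⁿ`. -/
def zetaN (n : ℕ) : ℝ := ∑' k : {k : ℕ // 0 < k}, ((k.1 : ℝ))⁻¹ ^ n

/-- `ζ_q(n) = Σ_{k ≥ 1, gcd(k,q) = 1} k⁻ⁿ`. -/
def zetaCop (q n : ℕ) : ℝ := ∑' k : {k : ℕ // 0 < k ∧ Nat.Coprime k q}, ((k.1 : ℝ))⁻¹ ^ n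

/-- The Siegel transform `f̂(Λ) = Σ_{v ∈ Λ∖{0}} f(v)`. -/
def Siegel (n : ℕ) (f : (Fin n → ℝ) → ℂ) (Λ : Set (Fin n → ℝ)) : ℂ :=
  ∑' v : {x : Fin n → ℝ // x ∈ Λ ∧ x ≠ 0}, f v

/-- The affine lattice `(ℤⁿ + α)·g` (row vector action). -/
def affLat (n : ℕ) (α : Fin n → ℝ) (g : SLR n) : Set (Fin n → ℝ) :=
  {x | ∃ v : Fin n → ℤ, x = Matrix.vecMul (fun i => (v i : ℝ) + α i) ((g : SLR n) : Matrix (Fin n) (Fin n) ℝ)}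

/-- The number of points of `Λ` in `A`, valued in `ℝ≥0∞`. -/
def latCount (n : ℕ) (Λ A : Set (Fin n → ℝ)) : ℝ≥0∞ := ∑' _ : ↥(Λ ∩ A), (1 : ℝ≥0∞)

/-- The discrepancy `D(Λ,A) = |#(Λ∩A) − vol(A)|`, valued in `ℝ≥0∞`. -/
def disc (n : ℕ) (Λ A : Set (Fin n → ℝ)) : ℝ≥0∞ :=
  (latCount n Λ A - volume A) + (volume A - latCount n Λ A)

/-- `⟨α⟩`: the sup-norm distance from `α` to `ℤⁿ`. -/
def distZ (n : ℕ) (α : Fin n → ℝ) : ℝ := ⨅ v : Fin n → ℤ, ‖α - fun i => (v i : ℝ)‖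

/-- `m` is a best simultaneous Diophantine approximation denominator of `α`. -/
def IsBestDenom (n : ℕ) (α : Fin n → ℝ) (m : ℕ) : Prop :=
  0 < m ∧ ∀ l : ℕ, 1 ≤ l → l < m →
    distZ n (fun i => (m : ℝ) * α i) < distZ n (fun i => (l : ℝ) * α i)

/-- The defining set of the Diophantine exponent `ω_α`. -/
def omegaSet (n : ℕ) (α : Fin n → ℝ) : Set ℝ :=
  {ν | 0 < ν ∧ ∀ T : ℝ, ∃ t : ℝ, T < t ∧ ∃ m : ℤ, m ≠ 0 ∧ |(m : ℝ)| < t ∧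
    distZ n (fun i => (m : ℝ) * α i) < t ^ (-ν)}

/-- The defining set of the uniform Diophantine exponent `ω̂_α`. -/
def omegaHatSet (n : ℕ) (α : Fin n → ℝ) : Set ℝ :=
  {ν | 0 < ν ∧ ∃ T : ℝ, ∀ t : ℝ, T ≤ t → ∃ m : ℤ, m ≠ 0 ∧ |(m : ℝ)| < t ∧
    distZ n (fun i => (m : ℝ) * α i) < t ^ (-ν)}

/-- The Diophantine exponent `ω_α`. -/
def dioExp (n : ℕ) (α : Fin n → ℝ) : ℝ := sSup (omegaSet n α)

/-- The uniform Diophantine exponent `ω̂_α`. -/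
def dioExpHat (n : ℕ) (α : Fin n → ℝ) : ℝ := sSup (omegaHatSet n α)

/-- `α ∈ ℝⁿ` is an irrational vector, i.e. `α ∉ ℚⁿ`. -/
def IsIrrationalVec (n : ℕ) (α : Fin n → ℝ) : Prop := ∀ v : Fin n → ℚ, α ≠ fun i => (v i : ℝ)

/-- The open Euclidean ball `B_t` of radius `t` centered at the origin. -/
def ball0 (n : ℕ) (t : ℝ) : Set (Fin n → ℝ) := {v | eNorm n v < t}

section Statement11Aux

namespace St11Aux

lemma coe_iR {n : ℕ} (γ : SLZ n) :
    ((ιR n γ : SLR n) : Matrix (Fin n) (Fin n) ℝ) = (γ : Matrix (Fin n) (Fin n) ℤ).map (Int.cast) := rfl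

lemma coe_iM {n q : ℕ} (γ : SLZ n) :
    ((ιM n q γ : Matrix.SpecialLinearGroup (Fin n) (ZMod q)) : Matrix (Fin n) (Fin n) (ZMod q))
      = (γ : Matrix (Fin n) (Fin n) ℤ).map (Int.cast) := rfl

lemma helperA {n : ℕ} (p : Fin n → ℤ) (q : ℕ) (hq : 0 < q) (γ : SLZ n) (v : Fin n → ℤ) :
    Matrix.vecMul (fun i => (v i : ℝ) + (p i : ℝ)/(q : ℝ)) ((ιR n γ : SLR n) : Matrix (Fin n) (Fin n) ℝ)
      = fun i => (((Matrix.vecMul (fun j => (q : ℤ) * v j + p j) ((γ : SLZ n) : Matrix (Fin n) (Fin n) ℤ) : Fin n → ℤ) i : ℝ))/(q : ℝ) := by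
  funext i
  have hq' : (q:ℝ) ≠ 0 := by positivity
  simp only [coe_iR, Matrix.vecMul, dotProduct, Matrix.map_apply]
  push_cast
  rw [Finset.sum_div]
  refine Finset.sum_congr rfl fun j _ => ?_
  field_simp

lemma key_sub {n : ℕ} (p : Fin n → ℤ) (q : ℕ) (hq : 0 < q) (γ : SLZ n)
    (hcong : ∀ i, (((Matrix.vecMul p ((γ : SLZ n) : Matrix (Fin n) (Fin n) ℤ)) i : ZMod q)) = ((p i : ZMod q)))
    (v : Fin n → ℤ) :
    ∃ w : Fin n → ℤ,
      Matrix.vecMul (fun i => (v i : ℝ) + (p i : ℝ)/(q : ℝ)) ((ιR n γ : SLR n) : Matrix (Fin n) (Fin n) ℝ)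
        = fun i => (w i : ℝ) + (p i : ℝ)/(q : ℝ) := by
  have hq' : (q:ℝ) ≠ 0 := by positivity
  set B := ((γ : SLZ n) : Matrix (Fin n) (Fin n) ℤ) with hB
  have hdvd : ∀ i, (q : ℤ) ∣ (Matrix.vecMul p B i - p i) := by
    intro i
    have : (((Matrix.vecMul p B i - p i : ℤ)) : ZMod q) = 0 := by
      push_cast
      rw [hcong i]
      ring
    exact_mod_cast (ZMod.intCast_zmod_eq_zero_iff_dvd _ q).mp this
  choose c hc using hdvd
  refine ⟨fun i => Matrix.vecMul v B i + c i, ?_⟩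
  rw [helperA p q hq γ v]
  funext i
  have hsplit : (fun j => (q : ℤ) * v j + p j) = ((q : ℤ) • v + p) := by
    funext j; simp [mul_comm]
  rw [hsplit, Matrix.add_vecMul, Matrix.smul_vecMul]
  have hpB : Matrix.vecMul p B i = p i + q * c i := by
    have := hc i; omega
  simp only [Pi.add_apply, Pi.smul_apply, smul_eq_mul, hpB]
  push_cast
  field_simp
  rw [← hB, hpB]
  push_cast
  ring

lemma vecMul_coe_inv {n : ℕ} {R : Type*} [CommRing R] (A : Matrix.SpecialLinearGroup (Fin n) R) (x : Fin n → R) :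
    Matrix.vecMul (Matrix.vecMul x (A : Matrix (Fin n) (Fin n) R))
      ((A⁻¹ : Matrix.SpecialLinearGroup (Fin n) R) : Matrix (Fin n) (Fin n) R) = x := by
  rw [Matrix.vecMul_vecMul, ← Matrix.SpecialLinearGroup.coe_mul, mul_inv_cancel]
  simp

lemma vecMul_coe_inv' {n : ℕ} {R : Type*} [CommRing R] (A : Matrix.SpecialLinearGroup (Fin n) R) (x : Fin n → R) :
    Matrix.vecMul (Matrix.vecMul x ((A⁻¹ : Matrix.SpecialLinearGroup (Fin n) R) : Matrix (Fin n) (Fin n) R))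
      ((A : Matrix.SpecialLinearGroup (Fin n) R) : Matrix (Fin n) (Fin n) R) = x := by
  simpa using vecMul_coe_inv A⁻¹ x

lemma cast_vecMul {n : ℕ} (q : ℕ) (x : Fin n → ℤ) (M : Matrix (Fin n) (Fin n) ℤ) :
    (fun i => (((Matrix.vecMul x M : Fin n → ℤ) i : ℤ) : ZMod q)) =
      Matrix.vecMul (fun i => ((x i : ZMod q))) (M.map (Int.cast)) := by
  funext i
  exact RingHom.map_vecMul (Int.castRingHom (ZMod q)) M x i

lemma cong_iff {n : ℕ} (q : ℕ) (p : Fin n → ℤ) (r : ℤ) (hru : IsUnit ((r : ZMod q)))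
    (γp γ : SLZ n)
    (hγp : p = Matrix.vecMul (r • en n) ((γp : SLZ n) : Matrix (Fin n) (Fin n) ℤ)) :
    (∀ i, (((Matrix.vecMul p ((γ : SLZ n) : Matrix (Fin n) (Fin n) ℤ)) i : ZMod q)) = ((p i : ZMod q)))
      ↔ γp * γ * γp⁻¹ ∈ Gamma1 n q := by
  set M : Matrix (Fin n) (Fin n) (ZMod q) := ((γ : SLZ n) : Matrix (Fin n) (Fin n) ℤ).map Int.cast with hM
  set Gp := ιM n q γp with hGp
  set u : Fin n → ZMod q := Matrix.vecMul (enM n q) (Gp : Matrix (Fin n) (Fin n) (ZMod q)) with hu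
  have hp : (fun i => ((p i : ZMod q))) = (r : ZMod q) • u := by
    have h1 : (fun i => ((p i : ZMod q))) =
        Matrix.vecMul (fun i => (((r • en n) i : ℤ) : ZMod q)) (((γp : SLZ n) : Matrix (Fin n) (Fin n) ℤ).map Int.cast) := by
      rw [← cast_vecMul q (r • en n) _]
      funext i
      rw [hγp]
    have h2 : (fun i => (((r • en n) i : ℤ) : ZMod q)) = (r : ZMod q) • enM n q := by
      funext i
      simp [en, enM, apply_ite (fun z : ℤ => (z : ZMod q)), Pi.smul_apply, mul_comm]
    rw [h1, h2, Matrix.smul_vecMul, hu, hGp, coe_iM]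
  have hLHS : (∀ i, (((Matrix.vecMul p ((γ : SLZ n) : Matrix (Fin n) (Fin n) ℤ)) i : ZMod q)) = ((p i : ZMod q)))
      ↔ Matrix.vecMul (fun i => ((p i : ZMod q))) M = (fun i => ((p i : ZMod q))) := by
    rw [← cast_vecMul q p _, funext_iff]
  rw [hLHS, hp, Matrix.smul_vecMul]
  have hcancel : ((r : ZMod q) • Matrix.vecMul u M = (r : ZMod q) • u) ↔ Matrix.vecMul u M = u := by
    constructor
    · intro h
      funext i
      have := congrFun h i
      simp only [Pi.smul_apply, smul_eq_mul] at this
      exact hru.mul_left_cancel this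
    · intro h; rw [h]
  rw [hcancel]
  have hmemb : (γp * γ * γp⁻¹ ∈ Gamma1 n q) ↔
      Matrix.vecMul (enM n q) ((ιM n q (γp * γ * γp⁻¹) : Matrix.SpecialLinearGroup (Fin n) (ZMod q)) : Matrix (Fin n) (Fin n) (ZMod q)) = enM n q := Iff.rfl
  rw [hmemb]
  have hcoe : ((ιM n q (γp * γ * γp⁻¹) : Matrix.SpecialLinearGroup (Fin n) (ZMod q)) : Matrix (Fin n) (Fin n) (ZMod q))
      = (Gp : Matrix (Fin n) (Fin n) (ZMod q)) * M * ((Gp⁻¹ : Matrix.SpecialLinearGroup (Fin n) (ZMod q)) : Matrix (Fin n) (Fin n) (ZMod q)) := by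
    rw [_root_.map_mul, _root_.map_mul, _root_.map_inv, Matrix.SpecialLinearGroup.coe_mul,
      Matrix.SpecialLinearGroup.coe_mul, hGp]
    rfl
  rw [hcoe]
  have expand : Matrix.vecMul (enM n q)
      ((Gp : Matrix (Fin n) (Fin n) (ZMod q)) * M * ((Gp⁻¹ : Matrix.SpecialLinearGroup (Fin n) (ZMod q)) : Matrix (Fin n) (Fin n) (ZMod q)))
      = Matrix.vecMul (Matrix.vecMul u M) ((Gp⁻¹ : Matrix.SpecialLinearGroup (Fin n) (ZMod q)) : Matrix (Fin n) (Fin n) (ZMod q)) := by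
    rw [← Matrix.vecMul_vecMul, ← Matrix.vecMul_vecMul, hu]
  rw [expand]
  constructor
  · intro h
    rw [h, hu, vecMul_coe_inv]
  · intro h
    calc Matrix.vecMul u M
        = Matrix.vecMul (Matrix.vecMul (Matrix.vecMul u M)
            ((Gp⁻¹ : Matrix.SpecialLinearGroup (Fin n) (ZMod q)) : Matrix (Fin n) (Fin n) (ZMod q)))
            ((Gp : Matrix.SpecialLinearGroup (Fin n) (ZMod q)) : Matrix (Fin n) (Fin n) (ZMod q)) :=
          (vecMul_coe_inv' Gp _).symm
      _ = Matrix.vecMul (enM n q) ((Gp : Matrix.SpecialLinearGroup (Fin n) (ZMod q)) : Matrix (Fin n) (Fin n) (ZMod q)) := by rw [h]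
      _ = u := hu.symm

lemma isUnit_r {q : ℕ} (r : ℤ) (h : Int.gcd r (q : ℤ) = 1) : IsUnit ((r : ZMod q)) := by
  obtain ⟨a, b, hab⟩ := Int.isCoprime_iff_gcd_eq_one.mpr h
  refine IsUnit.of_mul_eq_one ((a : ZMod q)) ?_
  have : ((a * r + b * (q : ℤ) : ℤ) : ZMod q) = 1 := by rw [hab]; norm_num
  push_cast at this
  rwa [ZMod.natCast_self, mul_zero, add_zero, mul_comm] at this

lemma affLat_one {n : ℕ} (α : Fin n → ℝ) :
    affLat n α 1 = {x : Fin n → ℝ | ∃ v : Fin n → ℤ, x = fun i => (v i : ℝ) + α i} := by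
  unfold affLat
  simp [Matrix.vecMul_one]

lemma affLat_mul {n : ℕ} (α : Fin n → ℝ) (a b : SLR n) :
    affLat n α (a * b) = (fun x => Matrix.vecMul x ((b : SLR n) : Matrix (Fin n) (Fin n) ℝ)) '' affLat n α a := by
  ext x
  simp only [affLat, Set.mem_image, Set.mem_setOf_eq]
  constructor
  · rintro ⟨v, rfl⟩
    exact ⟨_, ⟨v, rfl⟩, by rw [Matrix.SpecialLinearGroup.coe_mul, ← Matrix.vecMul_vecMul]⟩
  · rintro ⟨y, ⟨v, rfl⟩, rfl⟩
    exact ⟨v, by rw [Matrix.SpecialLinearGroup.coe_mul, ← Matrix.vecMul_vecMul]⟩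

lemma vecMul_injective {n : ℕ} (b : SLR n) :
    Function.Injective (fun x : Fin n → ℝ => Matrix.vecMul x ((b : SLR n) : Matrix (Fin n) (Fin n) ℝ)) := by
  intro x y h
  simp only at h
  have := congrArg (fun z => Matrix.vecMul z ((b⁻¹ : SLR n) : Matrix (Fin n) (Fin n) ℝ)) h
  rwa [vecMul_coe_inv, vecMul_coe_inv] at this

end St11Aux


end Statement11Aux

/-- Lemma 3.1 of the paper: the stabilizer of the affine lattice
`ℤⁿ + p/q` in `SL_n(ℝ)` is `γ_p⁻¹·Γ₁ⁿ(q)·γ_p`, and `Y_{p/q}` is identified with the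
homogeneous space `γ_p⁻¹Γ₁ⁿ(q)γ_p\SL_n(ℝ)`. -/
theorem statement11 (n : ℕ) (hn : 2 ≤ n) (p : Fin n → ℤ) (q : ℕ) (hq : 0 < q)
    (hpq : Int.gcd (Finset.univ.gcd p) (q : ℤ) = 1)
    (r : ℤ) (hr : r = Finset.univ.gcd p) (γp : SLZ n)
    (hγp : p = Matrix.vecMul (r • en n) ((γp : SLZ n) : Matrix (Fin n) (Fin n) ℤ)) :
    (∀ g : SLR n,
      affLat n (fun i => (p i : ℝ) / (q : ℝ)) g =
          {x : Fin n → ℝ | ∃ v : Fin n → ℤ, x = fun i => (v i : ℝ) + (p i : ℝ) / (q : ℝ)} ↔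
        ιR n γp * g * (ιR n γp)⁻¹ ∈ (Gamma1 n q).map (ιR n)) ∧
    (∃ Φ : Quotient (QuotientGroup.rightRel
        (((Gamma1 n q).map (ιR n)).comap (MulAut.conj (ιR n γp)).toMonoidHom)) →
          Set (Fin n → ℝ),
      Function.Injective Φ ∧
      Set.range Φ = {Λ : Set (Fin n → ℝ) | ∃ g : SLR n,
        Λ = affLat n (fun i => (p i : ℝ) / (q : ℝ)) g} ∧
      ∀ g : SLR n,
        Φ (Quotient.mk (QuotientGroup.rightRel
            (((Gamma1 n q).map (ιR n)).comap (MulAut.conj (ιR n γp)).toMonoidHom)) g) =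
          affLat n (fun i => (p i : ℝ) / (q : ℝ)) g) := by
    classical
  have hru : IsUnit ((r : ZMod q)) := St11Aux.isUnit_r r (by rw [hr]; exact hpq)
  have hq' : (q : ℝ) ≠ 0 := by positivity
  have part1 : ∀ g : SLR n,
      affLat n (fun i => (p i : ℝ) / (q : ℝ)) g =
          {x : Fin n → ℝ | ∃ v : Fin n → ℤ, x = fun i => (v i : ℝ) + (p i : ℝ) / (q : ℝ)} ↔
        ιR n γp * g * (ιR n γp)⁻¹ ∈ (Gamma1 n q).map (ιR n) := by
    intro g
    constructor
    · intro haff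
      have hmem : ∀ v : Fin n → ℤ, ∃ w : Fin n → ℤ,
          Matrix.vecMul (fun i => (v i : ℝ) + (p i : ℝ)/(q:ℝ)) ((g : SLR n) : Matrix (Fin n) (Fin n) ℝ)
            = fun i => (w i : ℝ) + (p i : ℝ)/(q:ℝ) := by
        intro v
        have hx : Matrix.vecMul (fun i => (v i : ℝ) + (p i : ℝ)/(q:ℝ)) ((g : SLR n) : Matrix (Fin n) (Fin n) ℝ)
            ∈ affLat n (fun i => (p i : ℝ)/(q:ℝ)) g := ⟨v, rfl⟩
        rw [haff] at hx
        exact hx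
      choose F hF using hmem
      set B : Matrix (Fin n) (Fin n) ℤ := fun j i => F (Pi.single j 1) i - F 0 i with hBdef
      have e0 : (fun i => (((0 : Fin n → ℤ)) i : ℝ) + (p i : ℝ)/(q:ℝ))
          = (fun i => (p i : ℝ)/(q:ℝ)) := by funext i; simp
      have h0 := hF 0
      rw [e0] at h0
      have hGB : ((g : SLR n) : Matrix (Fin n) (Fin n) ℝ) = B.map Int.cast := by
        ext j i
        have h1 := hF (Pi.single j 1)
        have e1 : (fun i => ((Pi.single j (1:ℤ) : Fin n → ℤ) i : ℝ) + (p i : ℝ)/(q:ℝ))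
            = (Pi.single j (1:ℝ)) + (fun i => (p i : ℝ)/(q:ℝ)) := by
          funext i
          simp [Pi.single_apply, apply_ite (fun z : ℤ => (z : ℝ))]
        rw [e1, Matrix.add_vecMul] at h1
        have h2 := congrFun h1 i
        have h3 := congrFun h0 i
        have h4 : (Matrix.vecMul (Pi.single j (1:ℝ)) ((g : SLR n) : Matrix (Fin n) (Fin n) ℝ)) i
            = ((g : SLR n) : Matrix (Fin n) (Fin n) ℝ) j i := by
          rw [Matrix.single_vecMul]; simp
        simp only [Pi.add_apply] at h2
        rw [h4, h3] at h2
        have : ((g : SLR n) : Matrix (Fin n) (Fin n) ℝ) j i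
            = (F (Pi.single j 1) i : ℝ) - (F 0 i : ℝ) := by linarith
        rw [this]
        show _ = ((F (Pi.single j 1) i - F 0 i : ℤ) : ℝ)
        push_cast
        ring
      have hdetB : B.det = 1 := by
        have h1 : (B.map (Int.cast : ℤ → ℝ)).det = 1 := by
          rw [← hGB]; exact g.2
        have h2 : ((B.det : ℤ) : ℝ) = (B.map (Int.cast : ℤ → ℝ)).det :=
          RingHom.map_det (Int.castRingHom ℝ) B
        have := h2.trans h1
        exact_mod_cast this
      set γ : SLZ n := ⟨B, hdetB⟩ with hγdef
      have hgγ : ιR n γ = g := by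
        apply Subtype.ext
        rw [St11Aux.coe_iR]
        exact hGB.symm
      have hcong : ∀ i, (((Matrix.vecMul p ((γ : SLZ n) : Matrix (Fin n) (Fin n) ℤ)) i : ZMod q)) = ((p i : ZMod q)) := by
        have hA := St11Aux.helperA p q hq γ 0
        rw [hgγ] at hA
        have ev : (fun j => (q : ℤ) * (0 : Fin n → ℤ) j + p j) = p := by funext j; simp
        rw [ev] at hA
        have e0' : (fun i => ((0 : Fin n → ℤ) i : ℝ) + (p i : ℝ)/(q:ℝ)) = (fun i => (p i : ℝ)/(q:ℝ)) := e0
        rw [e0'] at hA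
        have hint : ∀ i, (Matrix.vecMul p ((γ : SLZ n) : Matrix (Fin n) (Fin n) ℤ)) i = (q : ℤ) * F 0 i + p i := by
          intro i
          have hAi := congrFun hA i
          have h0i := congrFun h0 i
          rw [h0i] at hAi
          have : ((Matrix.vecMul p ((γ : SLZ n) : Matrix (Fin n) (Fin n) ℤ) : Fin n → ℤ) i : ℝ)
              = (q : ℝ) * (F 0 i : ℝ) + (p i : ℝ) := by
            field_simp at hAi
            linarith [hAi]
          exact_mod_cast this
        intro i
        rw [hint i]
        push_cast
        simp [ZMod.natCast_self]
      have hmem1 : γp * γ * γp⁻¹ ∈ Gamma1 n q := (St11Aux.cong_iff q p r hru γp γ hγp).mp hcong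
      refine ⟨γp * γ * γp⁻¹, hmem1, ?_⟩
      rw [_root_.map_mul, _root_.map_mul, _root_.map_inv, hgγ]
    · rintro ⟨δ, hδ, hδeq⟩
      set γ : SLZ n := γp⁻¹ * δ * γp with hγdef
      have hgγ : g = ιR n γ := by
        rw [hγdef, _root_.map_mul, _root_.map_mul, _root_.map_inv, hδeq]
        group
      have hmem1 : γp * γ * γp⁻¹ ∈ Gamma1 n q := by
        have h : γp * γ * γp⁻¹ = δ := by rw [hγdef]; group
        rw [h]; exact hδ
      have hmem2 : γp * γ⁻¹ * γp⁻¹ ∈ Gamma1 n q := by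
        have h : γp * γ⁻¹ * γp⁻¹ = δ⁻¹ := by rw [hγdef]; group
        rw [h]; exact inv_mem hδ
      have hcong1 := (St11Aux.cong_iff q p r hru γp γ hγp).mpr hmem1
      have hcong2 := (St11Aux.cong_iff q p r hru γp γ⁻¹ hγp).mpr hmem2
      apply Set.eq_of_subset_of_subset
      · rintro x ⟨v, rfl⟩
        obtain ⟨w, hw⟩ := St11Aux.key_sub p q hq γ hcong1 v
        refine ⟨w, ?_⟩
        rw [hgγ]
        exact hw
      · rintro x ⟨v, rfl⟩
        obtain ⟨u, hu⟩ := St11Aux.key_sub p q hq γ⁻¹ hcong2 v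
        refine ⟨u, ?_⟩
        have hinv : ((ιR n γ⁻¹ : SLR n) : Matrix (Fin n) (Fin n) ℝ)
            = (((ιR n γ)⁻¹ : SLR n) : Matrix (Fin n) (Fin n) ℝ) := by rw [_root_.map_inv]
        rw [hinv] at hu
        rw [hgγ, ← hu, Matrix.vecMul_vecMul]
        rw [← Matrix.vecMul_vecMul]
        exact (St11Aux.vecMul_coe_inv' (ιR n γ) _).symm
  refine ⟨part1, ?_⟩
  have hmemH : ∀ g : SLR n,
      g ∈ ((Gamma1 n q).map (ιR n)).comap (MulAut.conj (ιR n γp)).toMonoidHom ↔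
        ιR n γp * g * (ιR n γp)⁻¹ ∈ (Gamma1 n q).map (ιR n) := by
    intro g
    rw [Subgroup.mem_comap]
    rfl
  have hstab : ∀ g : SLR n, affLat n (fun i => (p i : ℝ)/(q:ℝ)) g = affLat n (fun i => (p i : ℝ)/(q:ℝ)) 1 ↔
      g ∈ ((Gamma1 n q).map (ιR n)).comap (MulAut.conj (ιR n γp)).toMonoidHom := by
    intro g
    rw [St11Aux.affLat_one, hmemH]
    exact part1 g
  have hrel : ∀ g1 g2 : SLR n,
      affLat n (fun i => (p i : ℝ)/(q:ℝ)) g1 = affLat n (fun i => (p i : ℝ)/(q:ℝ)) g2 ↔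
        g1 * g2⁻¹ ∈ ((Gamma1 n q).map (ιR n)).comap (MulAut.conj (ιR n γp)).toMonoidHom := by
    intro g1 g2
    have e1 : affLat n (fun i => (p i : ℝ)/(q:ℝ)) g1
        = (fun x => Matrix.vecMul x ((g2 : SLR n) : Matrix (Fin n) (Fin n) ℝ)) ''
            affLat n (fun i => (p i : ℝ)/(q:ℝ)) (g1 * g2⁻¹) := by
      rw [← St11Aux.affLat_mul]
      congr 1
      group
    have e2 : affLat n (fun i => (p i : ℝ)/(q:ℝ)) g2
        = (fun x => Matrix.vecMul x ((g2 : SLR n) : Matrix (Fin n) (Fin n) ℝ)) ''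
            affLat n (fun i => (p i : ℝ)/(q:ℝ)) 1 := by
      rw [← St11Aux.affLat_mul]
      congr 1
      group
    rw [e1, e2, Set.image_eq_image (St11Aux.vecMul_injective g2)]
    exact hstab (g1 * g2⁻¹)
  refine ⟨fun c => Quotient.liftOn c (fun g => affLat n (fun i => (p i : ℝ)/(q:ℝ)) g) ?_, ?_, ?_, ?_⟩
  · intro a b hab
    have h : b * a⁻¹ ∈ ((Gamma1 n q).map (ιR n)).comap (MulAut.conj (ιR n γp)).toMonoidHom :=
      QuotientGroup.rightRel_apply.mp hab
    exact (hrel a b).mpr (inv_mem_iff.mp (by simpa [_root_.mul_inv_rev] using h))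
  · intro c1 c2 hc
    obtain ⟨g1, rfl⟩ := Quotient.exists_rep c1
    obtain ⟨g2, rfl⟩ := Quotient.exists_rep c2
    have h : affLat n (fun i => (p i : ℝ)/(q:ℝ)) g1 = affLat n (fun i => (p i : ℝ)/(q:ℝ)) g2 := hc
    exact Quotient.sound (QuotientGroup.rightRel_apply.mpr ((hrel g2 g1).mp h.symm))
  · ext Λ
    constructor
    · rintro ⟨c, rfl⟩
      obtain ⟨g, rfl⟩ := Quotient.exists_rep c
      exact ⟨g, rfl⟩
    · rintro ⟨g, rfl⟩
      exact ⟨Quotient.mk _ g, rfl⟩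
  · intro g
    rfl
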